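/- Let H be a disjoint union of paths, all of order at most l − 1, with at least four components of orders n1 ≥ n2 ≥ n3 ≥ n4 such that n1 + n2 ≥ l − 1 and n3 + n4 ≥ l − 1. Then K2 ∨ H contains two vertex-disjoint copies of P_l. -/
import Mathlib


open SimpleGraph

/-- `G` contains a copy of `F` as a subgraph: an injective graph homomorphism. -/
def ContainsCopy {α β : Type*} (F : SimpleGraph α) (G : SimpleGraph β) : Prop :=
  ∃ f : α → β, Function.Injective f ∧ ∀ a b, F.Adj a b → G.Adj (f a) (f b)

/-- The cone over a graph: a new apex vertex joined to every vertex of `H`.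
`cone H = K1 ∨ H`, and `cone (cone H) = K2 ∨ H`. -/
def cone {β : Type*} (H : SimpleGraph β) : SimpleGraph (Option β) :=
  SimpleGraph.fromRel (fun x y =>
    x = none ∨ ∃ a b, x = some a ∧ y = some b ∧ H.Adj a b)

/-- The disjoint union of paths with orders `n 0, n 1, n 2, …`:
for each `i`, the vertices `(i, 0), …, (i, n i - 1)` form a path. -/
def pathsUnion (n : ℕ → ℕ) : SimpleGraph (ℕ × ℕ) :=
  SimpleGraph.fromRel (fun x y => x.1 = y.1 ∧ x.2 + 1 = y.2 ∧ y.2 < n x.1)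

/-- `t` pairwise vertex-disjoint copies of the path `P_l`. -/
def tPaths (t l : ℕ) : SimpleGraph (Fin t × Fin l) :=
  SimpleGraph.fromRel (fun x y => x.1 = y.1 ∧ (x.2 : ℕ) + 1 = (y.2 : ℕ))

/-- The spider (starlike tree) with `t` branches each having `m` vertices
(besides the common center). -/
def spider (t m : ℕ) : SimpleGraph (Option (Fin t × Fin m)) :=
  SimpleGraph.fromRel (fun x y =>
    (x = none ∧ ∃ p : Fin t × Fin m, y = some p ∧ (p.2 : ℕ) = 0) ∨
    (∃ p q : Fin t × Fin m, x = some p ∧ y = some q ∧ p.1 = q.1 ∧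
      (p.2 : ℕ) + 1 = (q.2 : ℕ)))

/-- `F` is a minor of `G`: branch sets realization. -/
def IsMinor {α β : Type*} (F : SimpleGraph α) (G : SimpleGraph β) : Prop :=
  ∃ B : α → G.Subgraph,
    (∀ a, (B a).verts.Nonempty) ∧
    (∀ a, (B a).Connected) ∧
    (∀ a a', a ≠ a' → Disjoint (B a).verts (B a').verts) ∧
    (∀ a a', F.Adj a a' → ∃ u ∈ (B a).verts, ∃ v ∈ (B a').verts, G.Adj u v)

/-- Planarity, via Wagner's forbidden-minor characterization. -/
def IsPlanar {β : Type*} (G : SimpleGraph β) : Prop :=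
  ¬ IsMinor (⊤ : SimpleGraph (Fin 5)) G ∧
  ¬ IsMinor (completeBipartiteGraph (Fin 3) (Fin 3)) G

/-- Outerplanarity, via the forbidden-minor characterization. -/
def IsOuterplanar {β : Type*} (G : SimpleGraph β) : Prop :=
  ¬ IsMinor (⊤ : SimpleGraph (Fin 4)) G ∧
  ¬ IsMinor (completeBipartiteGraph (Fin 2) (Fin 3)) G

/-- The spectral radius of a finite graph: the largest (adjacency) eigenvalue. -/
noncomputable def specRad {V : Type*} [Fintype V] (G : SimpleGraph V) : ℝ :=
  haveI := Classical.decRel G.Adj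
  sSup {μ : ℝ | ∃ x : V → ℝ, x ≠ 0 ∧ (G.adjMatrix ℝ).mulVec x = μ • x}


lemma cone_adj_none {β : Type*} (H : SimpleGraph β) (x : β) :
    (cone H).Adj none (some x) := by
  simp [cone, fromRel_adj]

lemma cone_adj_some {β : Type*} {H : SimpleGraph β} {a b : β} (h : H.Adj a b) :
    (cone H).Adj (some a) (some b) := by
  refine (fromRel_adj _ _ _).2 ⟨by simpa using h.ne, Or.inl (Or.inr ⟨a, b, rfl, rfl, h⟩)⟩

lemma pu_adj {n : ℕ → ℕ} {i j j' : ℕ} (h2 : j + 1 = j') (h3 : j' < n i) :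
    (pathsUnion n).Adj (i, j) (i, j') := by
  refine (fromRel_adj _ _ _).2 ⟨?_, Or.inl ⟨rfl, h2, h3⟩⟩
  simp [Prod.ext_iff]; omega

/-- The embedding. -/
def emb (l : ℕ) (n : ℕ → ℕ) (p : Fin 2 × Fin l) : Option (Option (ℕ × ℕ)) :=
  if (p.1 : ℕ) = 0 then
    if (p.2 : ℕ) < n 0 then some (some (0, (p.2 : ℕ)))
    else if (p.2 : ℕ) = n 0 then none
    else some (some (1, (p.2 : ℕ) - n 0 - 1))
  else
    if (p.2 : ℕ) < n 2 then some (some (2, (p.2 : ℕ)))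
    else if (p.2 : ℕ) = n 2 then some none
    else some (some (3, (p.2 : ℕ) - n 2 - 1))

lemma emb_step (l : ℕ) (hl : 4 ≤ l) (n : ℕ → ℕ)
    (h12 : l - 1 ≤ n 0 + n 1) (h34 : l - 1 ≤ n 2 + n 3)
    (i : Fin 2) (k m : Fin l) (hkm : (k : ℕ) + 1 = (m : ℕ)) :
    (cone (cone (pathsUnion n))).Adj (emb l n (i, k)) (emb l n (i, m)) := by
  have hm : (m : ℕ) < l := m.isLt
  unfold emb
  by_cases hi : (i : ℕ) = 0
  · simp only [hi, if_pos rfl]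
    by_cases h1 : (m : ℕ) < n 0
    · have h0 : (k : ℕ) < n 0 := by omega
      simp only [if_pos h0, if_pos h1]
      exact cone_adj_some (cone_adj_some (pu_adj hkm h1))
    · by_cases h2 : (m : ℕ) = n 0
      · have h0 : (k : ℕ) < n 0 := by omega
        simp only [if_pos h0, if_neg h1, if_pos h2]
        exact (cone_adj_none _ _).symm
      · by_cases h3 : (k : ℕ) < n 0
        · omega
        · by_cases h4 : (k : ℕ) = n 0
          · simp only [if_neg h3, if_pos h4, if_neg h1, if_neg h2]
            exact cone_adj_none _ _
          · simp only [if_neg h3, if_neg h4, if_neg h1, if_neg h2]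
            refine cone_adj_some (cone_adj_some (pu_adj (by omega) (by omega)))
  · simp only [if_neg hi]
    by_cases h1 : (m : ℕ) < n 2
    · have h0 : (k : ℕ) < n 2 := by omega
      simp only [if_pos h0, if_pos h1]
      exact cone_adj_some (cone_adj_some (pu_adj hkm h1))
    · by_cases h2 : (m : ℕ) = n 2
      · have h0 : (k : ℕ) < n 2 := by omega
        simp only [if_pos h0, if_neg h1, if_pos h2]
        exact cone_adj_some ((cone_adj_none _ _).symm)
      · by_cases h3 : (k : ℕ) < n 2
        · omega
        · by_cases h4 : (k : ℕ) = n 2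
          · simp only [if_neg h3, if_pos h4, if_neg h1, if_neg h2]
            exact cone_adj_some (cone_adj_none _ _)
          · simp only [if_neg h3, if_neg h4, if_neg h1, if_neg h2]
            refine cone_adj_some (cone_adj_some (pu_adj (by omega) (by omega)))

theorem K2_join_contains_two_disjoint_paths (l : ℕ) (hl : 4 ≤ l)
    (n : ℕ → ℕ) (hmono : Antitone n) (hbound : ∀ i, n i ≤ l - 1) (h4 : 1 ≤ n 3)
    (h12 : l - 1 ≤ n 0 + n 1) (h34 : l - 1 ≤ n 2 + n 3) :
    ContainsCopy (tPaths 2 l) (cone (cone (pathsUnion n))) := by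
  refine ⟨emb l n, ?_, ?_⟩
  · intro x y h
    unfold emb at h
    have hi2 : (x.1 : ℕ) < 2 := x.1.isLt
    have hj2 : (y.1 : ℕ) < 2 := y.1.isLt
    split_ifs at h with h1 h2 h3 h4 h5 h6 <;>
      simp only [Option.some.injEq, Prod.mk.injEq, reduceCtorEq, false_and, and_false] at h <;>
      exact Prod.ext (Fin.ext (by omega)) (Fin.ext (by omega))
  · rintro ⟨i, k⟩ ⟨j, m⟩ hab
    rw [tPaths, fromRel_adj] at hab
    obtain ⟨hne, ⟨h1, h2⟩ | ⟨h1, h2⟩⟩ := hab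
    · cases h1
      exact emb_step l hl n h12 h34 i k m h2
    · cases h1
      exact (emb_step l hl n h12 h34 i m k h2).symm
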